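/- arXiv:2506.15795 — 3 statements merged into one kernel-verified Lean document; each statement's English description precedes it below -/
import Mathlib

section
/- Let F : ℝ³ × ℝ³ → [0,∞) be a probability density on ℝ⁶ such that √F belongs to the Sobolev space H¹(ℝ⁶). Then ∫_{ℝ³}∫_{ℝ³} |v−w|^{−2} F(v,w) dv dw ≤ 2 ∫_{ℝ⁶} |∇√F(v,w)|² dv dw; equivalently, the left-hand side is bounded by one half of the Fisher information ∫_{ℝ⁶} |∇F|²/F. -/
/- STATEMENT 0:
Let F : ℝ³ × ℝ³ → [0,∞) be a probability density on ℝ⁶ such that √F belongs to the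
Sobolev space H¹(ℝ⁶).  Then
  ∫∫ |v−w|⁻² F(v,w) dv dw ≤ 2 ∫ |∇√F|².
The full gradient squared norm on ℝ³ × ℝ³ is the sum of the squared norms of the two
partial gradients.  Membership of √F in H¹ is expressed by: √F ∈ L² (automatic since F
is a probability density) and √F is differentiable with (the statement being an
inequality of lower integrals in [0,∞], the square-integrability of the gradient is not
needed as a separate hypothesis: if it fails, the right-hand side is ∞). -/

open MeasureTheory Real
open scoped RealInnerProductSpace ENNReal

set_option maxHeartbeats 1000000

section HardyAux
open Set Metric
noncomputable section

local notation "E3" => EuclideanSpace ℝ (Fin 3)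

lemma my_integrable_of_lintegral {α : Type*} [MeasurableSpace α] {μ : Measure α} {q : α → ℝ}
    (hq : Measurable q) (h0 : ∀ x, 0 ≤ q x)
    (hfin : ∫⁻ x, ENNReal.ofReal (q x) ∂μ ≠ ∞) : Integrable q μ := by
  refine ⟨hq.aestronglyMeasurable, ?_⟩
  rw [hasFiniteIntegral_iff_norm]
  simpa [Real.norm_eq_abs, abs_of_nonneg (h0 _)] using hfin.lt_top


lemma my_hardy1 (h : ℝ → ℝ) (hd : Differentiable ℝ h)
    (hM : ∫⁻ r in Set.Ioi (0:ℝ), ENNReal.ofReal (h r ^ 2 * r ^ 2) ≠ ∞) :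
    ∫⁻ r in Set.Ioi (0:ℝ), ENNReal.ofReal (h r ^ 2)
      ≤ 4 * ∫⁻ r in Set.Ioi (0:ℝ), ENNReal.ofReal (deriv h r ^ 2 * r ^ 2) := by
  set K := ∫⁻ r in Set.Ioi (0:ℝ), ENNReal.ofReal (deriv h r ^ 2 * r ^ 2) with hKdef
  rcases eq_or_ne K ⊤ with hK | hK
  · rw [hK]; simp
  have hcont : Continuous h := hd.continuous
  have hqmeas : Measurable fun r : ℝ => deriv h r ^ 2 * r ^ 2 :=
    ((measurable_deriv h).pow_const 2).mul ((measurable_id.pow_const 2))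
  have hqnn : ∀ r : ℝ, 0 ≤ deriv h r ^ 2 * r ^ 2 := fun r =>
    mul_nonneg (sq_nonneg _) (sq_nonneg _)
  -- key interval estimate
  have key : ∀ a b : ℝ, 0 < a → a ≤ b →
      ∫⁻ r in Set.Ioo a b, ENNReal.ofReal (h r ^ 2)
        ≤ ENNReal.ofReal (2 * (b * h b ^ 2)) + 4 * K := by
    intro a b ha hab
    have hsub : Set.Ioc a b ⊆ Set.Ioi 0 := fun x hx => lt_of_lt_of_le ha hx.1.le
    have hKfin : ∫⁻ r in Set.Ioc a b, ENNReal.ofReal (deriv h r ^ 2 * r ^ 2) ≠ ⊤ :=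
      fun hc => hK (top_le_iff.mp (hc ▸ lintegral_mono_set hsub))
    have hqint : IntegrableOn (fun r => deriv h r ^ 2 * r ^ 2) (Set.Ioc a b) :=
      my_integrable_of_lintegral hqmeas hqnn hKfin
    have hh2int : IntegrableOn (fun r => h r ^ 2) (Set.Ioc a b) :=
      (hcont.pow 2).integrableOn_Ioc
    -- cross term
    have hcint : IntegrableOn (fun r => r * (2 * h r * deriv h r)) (Set.Ioc a b) := by
      refine Integrable.mono' (hh2int.add hqint)
        ((measurable_id.mul (((hcont.measurable).const_mul 2).mul
          (measurable_deriv h))).aestronglyMeasurable) ?_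
      refine Filter.Eventually.of_forall fun r => ?_
      have h1 : |r * (2 * h r * deriv h r)| = 2 * (|h r| * (|r| * |deriv h r|)) := by
        rw [abs_mul, abs_mul, abs_mul, abs_two]; ring
      rw [Real.norm_eq_abs, h1]
      simp only [Pi.add_apply]
      have h2 : |r| ^ 2 * |deriv h r| ^ 2 = deriv h r ^ 2 * r ^ 2 := by
        rw [sq_abs, sq_abs]; ring
      nlinarith [sq_nonneg (|h r| - |r| * |deriv h r|), sq_abs (h r), h2,
        abs_nonneg (h r), mul_nonneg (abs_nonneg r) (abs_nonneg (deriv h r))]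
    -- FTC
    have ftc : ∫ r in a..b, (h r ^ 2 + r * (2 * h r * deriv h r))
        = b * h b ^ 2 - a * h a ^ 2 := by
      refine intervalIntegral.integral_eq_sub_of_hasDerivAt (f := fun r => r * h r ^ 2)
        (fun x _ => ?_) ?_
      · have h1 : HasDerivAt (fun r : ℝ => r) 1 x := hasDerivAt_id x
        have h2 : HasDerivAt (fun r => h r ^ 2) (2 * h x * deriv h x) x := by
          have := ((hd x).hasDerivAt).fun_pow 2
          simpa [pow_one] using this
        have := h1.fun_mul h2
        convert this using 1
        · rfl
        ring
      · rw [intervalIntegrable_iff_integrableOn_Ioc_of_le hab]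
        exact hh2int.add hcint
    have hint_split : ∫ r in Set.Ioc a b, (h r ^ 2 + r * (2 * h r * deriv h r))
        = (∫ r in Set.Ioc a b, h r ^ 2) + ∫ r in Set.Ioc a b, r * (2 * h r * deriv h r) :=
      integral_add hh2int hcint
    have ftc' : (∫ r in Set.Ioc a b, h r ^ 2)
        = b * h b ^ 2 - a * h a ^ 2 - ∫ r in Set.Ioc a b, r * (2 * h r * deriv h r) := by
      rw [intervalIntegral.integral_of_le hab] at ftc
      rw [← ftc, hint_split]; ring
    -- pointwise bound for the negated cross term
    have hpt : ∀ r : ℝ, -(r * (2 * h r * deriv h r))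
        ≤ (1/2) * h r ^ 2 + 2 * (deriv h r ^ 2 * r ^ 2) := by
      intro r
      nlinarith [sq_nonneg (h r + 2 * r * deriv h r)]
    have hmono : ∫ r in Set.Ioc a b, -(r * (2 * h r * deriv h r))
        ≤ ∫ r in Set.Ioc a b, ((1/2) * h r ^ 2 + 2 * (deriv h r ^ 2 * r ^ 2)) := by
      refine integral_mono hcint.neg ((hh2int.const_mul _).add (hqint.const_mul _)) ?_
      intro r; exact hpt r
    have hX : ∫ r in Set.Ioc a b, h r ^ 2
        ≤ 2 * (b * h b ^ 2) + 4 * ∫ r in Set.Ioc a b, deriv h r ^ 2 * r ^ 2 := by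
      have e1 : ∫ r in Set.Ioc a b, ((1/2) * h r ^ 2 + 2 * (deriv h r ^ 2 * r ^ 2))
          = (1/2) * (∫ r in Set.Ioc a b, h r ^ 2)
            + 2 * ∫ r in Set.Ioc a b, deriv h r ^ 2 * r ^ 2 := by
        rw [integral_add (hh2int.const_mul _) (hqint.const_mul _), integral_const_mul,
          integral_const_mul]
      have e2 : ∫ r in Set.Ioc a b, -(r * (2 * h r * deriv h r))
          = -∫ r in Set.Ioc a b, r * (2 * h r * deriv h r) := integral_neg _
      have hbd : 0 ≤ a * h a ^ 2 := mul_nonneg ha.le (sq_nonneg _)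
      rw [e2, e1] at hmono
      linarith [ftc']
    -- pass to lintegral
    have hXnn : 0 ≤ ∫ r in Set.Ioc a b, deriv h r ^ 2 * r ^ 2 :=
      integral_nonneg fun r => hqnn r
    calc ∫⁻ r in Set.Ioo a b, ENNReal.ofReal (h r ^ 2)
        ≤ ∫⁻ r in Set.Ioc a b, ENNReal.ofReal (h r ^ 2) :=
          lintegral_mono_set Set.Ioo_subset_Ioc_self
      _ = ENNReal.ofReal (∫ r in Set.Ioc a b, h r ^ 2) :=
          (ofReal_integral_eq_lintegral_ofReal hh2int
            (Filter.Eventually.of_forall fun r => sq_nonneg _)).symm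
      _ ≤ ENNReal.ofReal (2 * (b * h b ^ 2)
            + 4 * ∫ r in Set.Ioc a b, deriv h r ^ 2 * r ^ 2) := ENNReal.ofReal_le_ofReal hX
      _ ≤ ENNReal.ofReal (2 * (b * h b ^ 2))
            + ENNReal.ofReal (4 * ∫ r in Set.Ioc a b, deriv h r ^ 2 * r ^ 2) :=
          ENNReal.ofReal_add_le
      _ ≤ ENNReal.ofReal (2 * (b * h b ^ 2)) + 4 * K := by
          gcongr
          rw [ENNReal.ofReal_mul (by norm_num)]
          have : ENNReal.ofReal (∫ r in Set.Ioc a b, deriv h r ^ 2 * r ^ 2)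
              = ∫⁻ r in Set.Ioc a b, ENNReal.ofReal (deriv h r ^ 2 * r ^ 2) :=
            ofReal_integral_eq_lintegral_ofReal hqint
              (Filter.Eventually.of_forall fun r => hqnn r)
          rw [this]
          have h4 : ENNReal.ofReal (4:ℝ) = 4 := by norm_num
          rw [h4]
          exact mul_le_mul_right (lintegral_mono_set hsub) 4
  -- boundary point selection
  have sel : ∀ (m : ℕ) (b0 : ℝ), ∃ b, max b0 1 ≤ b ∧ b * h b ^ 2 ≤ 1 / (m + 1) := by
    intro m b0
    by_contra hcon
    push_neg at hcon
    set B := max b0 1 with hB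
    have hB1 : (1:ℝ) ≤ B := le_max_right _ _
    have hB0 : 0 < B := lt_of_lt_of_le one_pos hB1
    have hlow : ∀ r ∈ Set.Ioi B, (1 / (m + 1) * B : ℝ) ≤ h r ^ 2 * r ^ 2 := by
      intro r hr
      have hrB : B < r := hr
      have hr0 : 0 < r := lt_trans hB0 hrB
      have h1 : 1 / ((m:ℝ) + 1) < r * h r ^ 2 := hcon r hrB.le
      have h2 : (1 / ((m:ℝ) + 1)) * B ≤ (r * h r ^ 2) * r := by
        have hm : (0:ℝ) < 1 / ((m:ℝ)+1) := by positivity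
        have := mul_le_mul h1.le hrB.le hB0.le (by nlinarith [sq_nonneg (h r)])
        linarith
      calc (1 / ((m:ℝ)+1) * B) ≤ (r * h r ^ 2) * r := h2
        _ = h r ^ 2 * r ^ 2 := by ring
    have hinf : (∫⁻ r in Set.Ioi B, ENNReal.ofReal (h r ^ 2 * r ^ 2)) = ⊤ := by
      have hc : ∫⁻ _ in Set.Ioi B, ENNReal.ofReal (1 / (m + 1) * B) ∂volume
          ≤ ∫⁻ r in Set.Ioi B, ENNReal.ofReal (h r ^ 2 * r ^ 2) := by
        refine setLIntegral_mono (((hcont.measurable.pow_const 2).mul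
          (measurable_id.pow_const 2)).ennreal_ofReal) fun r hr => ?_
        exact ENNReal.ofReal_le_ofReal (hlow r hr)
      rw [setLIntegral_const] at hc
      rw [Real.volume_Ioi] at hc
      have hpos : (0:ℝ≥0∞) < ENNReal.ofReal (1 / (m + 1) * B) := by
        rw [ENNReal.ofReal_pos]; positivity
      rw [ENNReal.mul_top hpos.ne'] at hc
      exact top_le_iff.mp hc
    refine hM ?_
    refine top_le_iff.mp ?_
    calc (⊤:ℝ≥0∞) = ∫⁻ r in Set.Ioi B, ENNReal.ofReal (h r ^ 2 * r ^ 2) := hinf.symm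
      _ ≤ ∫⁻ r in Set.Ioi 0, ENNReal.ofReal (h r ^ 2 * r ^ 2) :=
          lintegral_mono_set (Set.Ioi_subset_Ioi hB0.le)
  -- covering Ioi 0 by Ioo (1/(n+1)) (n+1)
  set ν := volume.withDensity fun r : ℝ => ENNReal.ofReal (h r ^ 2) with hν
  have hνapp : ∀ s : Set ℝ, MeasurableSet s → ν s = ∫⁻ r in s, ENNReal.ofReal (h r ^ 2) := by
    intro s hs
    rw [hν, withDensity_apply _ hs]
  have hcover : Set.Ioi (0:ℝ) = ⋃ n : ℕ, Set.Ioo (((n:ℝ)+1)⁻¹) ((n:ℝ)+1) := by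
    ext x
    simp only [Set.mem_Ioi, Set.mem_iUnion, Set.mem_Ioo]
    constructor
    · intro hx
      obtain ⟨n, hn⟩ := exists_nat_gt (max x x⁻¹)
      refine ⟨n, ?_, ?_⟩
      · have hxi : x⁻¹ < (n:ℝ) + 1 := lt_trans (lt_of_le_of_lt (le_max_right x x⁻¹) hn)
          (by linarith)
        exact (inv_lt_comm₀ hx (by positivity)).mp hxi
      · exact lt_trans (lt_of_le_of_lt (le_max_left x x⁻¹) hn) (by linarith)
    · rintro ⟨n, hn, -⟩
      exact lt_trans (by positivity) hn
  have hmonoSet : Monotone fun n : ℕ => Set.Ioo (((n:ℝ)+1)⁻¹) ((n:ℝ)+1) := by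
    intro m n hmn
    apply Set.Ioo_subset_Ioo
    · apply inv_anti₀ (by positivity)
      exact_mod_cast by exact_mod_cast Nat.add_le_add_right hmn 1
    · exact_mod_cast Nat.add_le_add_right hmn 1
  have hUnion : ν (Set.Ioi (0:ℝ)) = ⨆ n : ℕ, ν (Set.Ioo (((n:ℝ)+1)⁻¹) ((n:ℝ)+1)) := by
    rw [hcover]
    exact hmonoSet.measure_iUnion
  rw [← hνapp _ measurableSet_Ioi, hUnion]
  refine iSup_le fun n => ?_
  rw [hνapp _ measurableSet_Ioo]
  -- fixed interval: a = (n+1)⁻¹, b = n+1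
  set a : ℝ := ((n:ℝ)+1)⁻¹ with hadef
  set b : ℝ := (n:ℝ)+1 with hbdef
  have ha : 0 < a := by positivity
  have hab : a ≤ b := by
    rw [hadef, hbdef]
    calc ((n:ℝ)+1)⁻¹ ≤ 1 := by
          rw [inv_le_one_iff₀]; right; linarith [Nat.cast_nonneg (α := ℝ) n]
      _ ≤ (n:ℝ)+1 := by linarith [Nat.cast_nonneg (α := ℝ) n]
  refine ENNReal.le_of_forall_pos_le_add fun ε hε h4K => ?_
  obtain ⟨m, hm⟩ := exists_nat_gt (2 / (ε:ℝ))
  obtain ⟨b', hb'1, hb'2⟩ := sel m b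
  have hbb' : b ≤ b' := le_trans (le_max_left _ _) hb'1
  have hstep : ∫⁻ r in Set.Ioo a b, ENNReal.ofReal (h r ^ 2)
      ≤ ENNReal.ofReal (2 * (b' * h b' ^ 2)) + 4 * K :=
    le_trans (lintegral_mono_set (Set.Ioo_subset_Ioo le_rfl hbb')) (key a b' ha (le_trans hab hbb'))
  refine le_trans hstep ?_
  rw [add_comm (4*K) ε]
  gcongr
  have hεpos : (0:ℝ) < ε := hε
  have : 2 * (b' * h b' ^ 2) ≤ 2 / ((m:ℝ) + 1) := by
    rw [show (2:ℝ) / ((m:ℝ)+1) = 2 * (1 / ((m:ℝ)+1)) by rw [mul_one_div]]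
    linarith
  refine le_trans (ENNReal.ofReal_le_ofReal this) ?_
  rw [← ENNReal.ofReal_coe_nnreal]
  apply ENNReal.ofReal_le_ofReal
  have hm1 : 2 / (ε:ℝ) < (m:ℝ) + 1 := lt_trans hm (by linarith)
  rw [div_le_iff₀ (by positivity)]
  rw [div_lt_iff₀ (by positivity)] at hm1
  linarith


lemma my_polar (f : E3 → ℝ≥0∞) (hf : Measurable f) :
    ∫⁻ x, f x = ∫⁻ ω : sphere (0:E3) 1, ∫⁻ r in Set.Ioi (0:ℝ),
      ENNReal.ofReal (r ^ 2) * f (r • (ω : E3)) ∂volume ∂(volume.toSphere) := by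
  have hdim : Module.finrank ℝ E3 - 1 = 2 := by
    simp [finrank_euclideanSpace_fin]
  have h0 : ∫⁻ x, f x = ∫⁻ x in ({0}ᶜ : Set E3), f x := by
    rw [MeasureTheory.restrict_compl_singleton]
  have h1 := (lintegral_subtype_comap (μ := (volume : Measure E3))
    (measurableSet_singleton (0:E3)).compl f).symm
  have mp := (Measure.measurePreserving_homeomorphUnitSphereProd (volume : Measure E3))
  set e := homeomorphUnitSphereProd E3 with he
  have hF'meas : Measurable fun p : sphere (0:E3) 1 × Set.Ioi (0:ℝ) => f ((e.symm p : E3)) := by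
    exact hf.comp (continuous_subtype_val.comp e.symm.continuous).measurable
  have h2 : ∫⁻ (x : ({0}ᶜ : Set E3)), f (x : E3) ∂((volume : Measure E3).comap (↑))
      = ∫⁻ p, f ((e.symm p : E3))
          ∂((volume : Measure E3).toSphere.prod (Measure.volumeIoiPow 2)) := by
    rw [← hdim]
    rw [← mp.lintegral_comp hF'meas]
    refine lintegral_congr fun x => ?_
    congr 1
    rw [Homeomorph.symm_apply_apply]
  have h3 : ∫⁻ p, f ((e.symm p : E3))
        ∂((volume : Measure E3).toSphere.prod (Measure.volumeIoiPow 2))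
      = ∫⁻ ω : sphere (0:E3) 1, ∫⁻ ρ : Set.Ioi (0:ℝ), f ((ρ:ℝ) • (ω : E3))
          ∂(Measure.volumeIoiPow 2) ∂(volume.toSphere) := by
    rw [lintegral_prod _ hF'meas.aemeasurable]
    refine lintegral_congr fun ω => lintegral_congr fun ρ => ?_
    congr 1
  have h4 : ∀ ω : sphere (0:E3) 1,
      ∫⁻ ρ : Set.Ioi (0:ℝ), f ((ρ:ℝ) • (ω : E3)) ∂(Measure.volumeIoiPow 2)
      = ∫⁻ r in Set.Ioi (0:ℝ), ENNReal.ofReal (r ^ 2) * f (r • (ω : E3)) ∂volume := by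
    intro ω
    rw [Measure.volumeIoiPow]
    rw [lintegral_withDensity_eq_lintegral_mul _ (by
      exact (measurable_subtype_coe.pow_const 2).ennreal_ofReal) (by
      exact hf.comp (measurable_subtype_coe.smul_const _))]
    simp only [Pi.mul_apply]
    exact lintegral_subtype_comap measurableSet_Ioi
      (fun r : ℝ => ENNReal.ofReal (r ^ 2) * f (r • (ω : E3)))
  rw [h0, h1, h2, h3]
  exact lintegral_congr fun ω => h4 ω


lemma my_hardy3 (g : E3 → ℝ) (hg : Differentiable ℝ g)
    (hg2 : ∫⁻ x, ENNReal.ofReal (g x ^ 2) ≠ ∞) :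
    ∫⁻ x, ENNReal.ofReal ((‖x‖ ^ 2)⁻¹ * g x ^ 2)
      ≤ 4 * ∫⁻ x, ENNReal.ofReal (‖fderiv ℝ g x‖ ^ 2) := by
  borelize (EuclideanSpace ℝ (Fin 3) →L[ℝ] ℝ)
  have hgc : Continuous g := hg.continuous
  have hDmeas : Measurable fun x : E3 => ENNReal.ofReal (‖fderiv ℝ g x‖ ^ 2) :=
    (((measurable_fderiv ℝ g).norm).pow_const 2).ennreal_ofReal
  have hLmeas : Measurable fun x : E3 => ENNReal.ofReal ((‖x‖ ^ 2)⁻¹ * g x ^ 2) :=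
    ((((continuous_norm.pow 2).measurable).inv).mul ((hgc.pow 2).measurable)).ennreal_ofReal
  have hGmeas : Measurable fun x : E3 => ENNReal.ofReal (g x ^ 2) :=
    ((hgc.pow 2).measurable).ennreal_ofReal
  have hsm : Continuous fun q : sphere (0:E3) 1 × ℝ => q.2 • (q.1 : E3) :=
    continuous_snd.smul (continuous_subtype_val.comp continuous_fst)
  have hωnorm : ∀ ω : sphere (0:E3) 1, ‖(ω:E3)‖ = 1 := fun ω =>
    mem_sphere_zero_iff_norm.mp ω.2
  -- ray functions
  have hray : ∀ (ω : sphere (0:E3) 1), Differentiable ℝ (fun t : ℝ => g (t • (ω:E3))) := by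
    intro ω
    exact hg.comp (differentiable_id.smul_const _)
  have hderay : ∀ (ω : sphere (0:E3) 1) (r : ℝ),
      deriv (fun t : ℝ => g (t • (ω:E3))) r = fderiv ℝ g (r • (ω:E3)) (ω:E3) := by
    intro ω r
    have h1 : HasDerivAt (fun t : ℝ => t • (ω:E3)) ((1:ℝ) • (ω:E3)) r :=
      (hasDerivAt_id r).smul_const _
    have h2 := (hg (r • (ω:E3))).hasFDerivAt.comp_hasDerivAt r h1
    rw [one_smul] at h2
    exact h2.deriv
  -- finiteness of ray L² a.e.
  set M : (sphere (0:E3) 1) → ℝ≥0∞ :=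
    fun ω => ∫⁻ r in Set.Ioi (0:ℝ), ENNReal.ofReal (g (r • (ω:E3)) ^ 2 * r ^ 2) with hMdef
  have hMmeas : Measurable M := by
    apply Measurable.lintegral_prod_right'
      (f := fun q : (sphere (0:E3) 1) × ℝ => ENNReal.ofReal (g (q.2 • (q.1:E3)) ^ 2 * q.2 ^ 2))
    exact (((hgc.comp hsm).pow 2).mul (continuous_snd.pow 2)).measurable.ennreal_ofReal
  have hMsum : ∫⁻ ω, M ω ∂((volume : Measure (EuclideanSpace ℝ (Fin 3))).toSphere) = ∫⁻ x, ENNReal.ofReal (g x ^ 2) := by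
    rw [my_polar _ hGmeas]
    refine lintegral_congr fun ω => ?_
    refine setLIntegral_congr_fun measurableSet_Ioi (fun r hr => ?_)
    rw [ENNReal.ofReal_mul (sq_nonneg _), mul_comm]
  have hMae : ∀ᵐ (ω : sphere (0 : EuclideanSpace ℝ (Fin 3)) 1) ∂((volume : Measure (EuclideanSpace ℝ (Fin 3))).toSphere), M ω < ∞ :=
    by
      refine ae_lt_top hMmeas ?_
      rw [hMsum]; exact hg2
  -- inner inequality a.e.
  have hinner : ∀ᵐ (ω : sphere (0 : EuclideanSpace ℝ (Fin 3)) 1) ∂((volume : Measure (EuclideanSpace ℝ (Fin 3))).toSphere),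
      (∫⁻ r in Set.Ioi (0:ℝ), ENNReal.ofReal (r ^ 2)
          * ENNReal.ofReal ((‖r • (ω:E3)‖ ^ 2)⁻¹ * g (r • (ω:E3)) ^ 2))
        ≤ 4 * ∫⁻ r in Set.Ioi (0:ℝ), ENNReal.ofReal (r ^ 2)
          * ENNReal.ofReal (‖fderiv ℝ g (r • (ω:E3))‖ ^ 2) := by
    filter_upwards [hMae] with ω hMω
    have hA : (∫⁻ r in Set.Ioi (0:ℝ), ENNReal.ofReal (r ^ 2)
          * ENNReal.ofReal ((‖r • (ω:E3)‖ ^ 2)⁻¹ * g (r • (ω:E3)) ^ 2))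
        = ∫⁻ r in Set.Ioi (0:ℝ), ENNReal.ofReal (g (r • (ω:E3)) ^ 2) := by
      refine setLIntegral_congr_fun measurableSet_Ioi
        (fun r hr => ?_)
      have hr0 : (0:ℝ) < r := hr
      have hn : ‖r • (ω:E3)‖ = r := by
        rw [norm_smul, hωnorm ω, mul_one, Real.norm_eq_abs, abs_of_pos hr0]
      rw [hn, ← ENNReal.ofReal_mul (sq_nonneg r)]
      congr 1
      field_simp
    rw [hA]
    have h1 := my_hardy1 (fun t : ℝ => g (t • (ω:E3))) (hray ω) hMω.ne
    refine le_trans h1 ?_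
    gcongr 4 * ?_
    have hmeasB : Measurable fun r : ℝ => ENNReal.ofReal (r ^ 2)
        * ENNReal.ofReal (‖fderiv ℝ g (r • (ω:E3))‖ ^ 2) := by
      apply Measurable.fun_mul
      · exact (measurable_id.pow_const 2).ennreal_ofReal
      · exact hDmeas.comp (measurable_id.smul_const _)
    refine setLIntegral_mono hmeasB fun r hr => ?_
    rw [hderay ω r]
    have hb : fderiv ℝ g (r • (ω:E3)) (ω:E3) ^ 2 * r ^ 2 ≤ ‖fderiv ℝ g (r • (ω:E3))‖ ^ 2 * r ^ 2 := by
      have := (fderiv ℝ g (r • (ω:E3))).le_opNorm (ω:E3)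
      rw [hωnorm ω, mul_one] at this
      have h2 : fderiv ℝ g (r • (ω:E3)) (ω:E3) ^ 2 ≤ ‖fderiv ℝ g (r • (ω:E3))‖ ^ 2 := by
        rw [← sq_abs (fderiv ℝ g (r • (ω:E3)) (ω:E3))]
        apply pow_le_pow_left₀ (abs_nonneg _)
        simpa [Real.norm_eq_abs] using this
      exact mul_le_mul_of_nonneg_right h2 (sq_nonneg _)
    refine le_trans (ENNReal.ofReal_le_ofReal hb) ?_
    rw [ENNReal.ofReal_mul (sq_nonneg _), mul_comm]
  -- combine
  rw [my_polar _ hLmeas, my_polar _ hDmeas]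
  have hBmeas : Measurable fun ω : sphere (0:E3) 1 =>
      ∫⁻ r in Set.Ioi (0:ℝ), ENNReal.ofReal (r ^ 2)
        * ENNReal.ofReal (‖fderiv ℝ g (r • (ω:E3))‖ ^ 2) := by
    apply Measurable.lintegral_prod_right'
      (f := fun q : (sphere (0:E3) 1) × ℝ => ENNReal.ofReal (q.2 ^ 2)
        * ENNReal.ofReal (‖fderiv ℝ g (q.2 • (q.1:E3))‖ ^ 2))
    exact ((continuous_snd.pow 2).measurable.ennreal_ofReal).mul (hDmeas.comp hsm.measurable)
  calc ∫⁻ ω, (∫⁻ r in Set.Ioi (0:ℝ), ENNReal.ofReal (r ^ 2)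
          * ENNReal.ofReal ((‖r • (ω:E3)‖ ^ 2)⁻¹ * g (r • (ω:E3)) ^ 2)) ∂((volume : Measure (EuclideanSpace ℝ (Fin 3))).toSphere)
      ≤ ∫⁻ ω, 4 * (∫⁻ r in Set.Ioi (0:ℝ), ENNReal.ofReal (r ^ 2)
          * ENNReal.ofReal (‖fderiv ℝ g (r • (ω:E3))‖ ^ 2)) ∂((volume : Measure (EuclideanSpace ℝ (Fin 3))).toSphere) :=
        lintegral_mono_ae hinner
    _ = 4 * ∫⁻ ω, (∫⁻ r in Set.Ioi (0:ℝ), ENNReal.ofReal (r ^ 2)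
          * ENNReal.ofReal (‖fderiv ℝ g (r • (ω:E3))‖ ^ 2)) ∂((volume : Measure (EuclideanSpace ℝ (Fin 3))).toSphere) :=
        lintegral_const_mul 4 hBmeas


lemma my_hardy3' (g : E3 → ℝ) (hg : Differentiable ℝ g) (c : E3)
    (hg2 : ∫⁻ x, ENNReal.ofReal (g x ^ 2) ≠ ∞) :
    ∫⁻ x, ENNReal.ofReal ((‖x - c‖ ^ 2)⁻¹ * g x ^ 2)
      ≤ 4 * ∫⁻ x, ENNReal.ofReal (‖fderiv ℝ g x‖ ^ 2) := by
  borelize (EuclideanSpace ℝ (Fin 3) →L[ℝ] ℝ)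
  have hgc : Continuous g := hg.continuous
  set g' : E3 → ℝ := fun x => g (x + c) with hg'def
  have hg' : Differentiable ℝ g' := hg.comp (differentiable_id.add_const c)
  have hfd : ∀ x, fderiv ℝ g' x = fderiv ℝ g (x + c) := by
    intro x
    have h1 : HasFDerivAt (fun y : E3 => y + c) (ContinuousLinearMap.id ℝ E3) x :=
      (hasFDerivAt_id x).add_const c
    have h2 := ((hg (x + c)).hasFDerivAt.comp x h1)
    rw [ContinuousLinearMap.comp_id] at h2
    exact h2.fderiv
  have hg2' : ∫⁻ x, ENNReal.ofReal (g' x ^ 2) ≠ ∞ := by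
    have := (measurePreserving_add_right (volume : Measure E3) c).lintegral_comp
      (f := fun x => ENNReal.ofReal (g x ^ 2)) ((hgc.pow 2).measurable.ennreal_ofReal)
    rw [hg'def]
    simpa using this ▸ hg2
  have hL : ∫⁻ x, ENNReal.ofReal ((‖x - c‖ ^ 2)⁻¹ * g x ^ 2)
      = ∫⁻ x, ENNReal.ofReal ((‖x‖ ^ 2)⁻¹ * g' x ^ 2) := by
    have hmeas : Measurable fun x : E3 => ENNReal.ofReal ((‖x - c‖ ^ 2)⁻¹ * g x ^ 2) :=
      (((((continuous_id.sub continuous_const).norm.pow 2).measurable).inv).mul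
        ((hgc.pow 2).measurable)).ennreal_ofReal
    have := (measurePreserving_add_right (volume : Measure E3) c).lintegral_comp
      (f := fun x => ENNReal.ofReal ((‖x - c‖ ^ 2)⁻¹ * g x ^ 2)) hmeas
    rw [← this]
    refine lintegral_congr fun x => ?_
    simp [hg'def, add_sub_cancel_right]
  have hR : ∫⁻ x, ENNReal.ofReal (‖fderiv ℝ g' x‖ ^ 2)
      = ∫⁻ x, ENNReal.ofReal (‖fderiv ℝ g x‖ ^ 2) := by
    have hmeas : Measurable fun x : E3 => ENNReal.ofReal (‖fderiv ℝ g x‖ ^ 2) :=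
      (((measurable_fderiv ℝ g).norm).pow_const 2).ennreal_ofReal
    have := (measurePreserving_add_right (volume : Measure E3) c).lintegral_comp
      (f := fun x => ENNReal.ofReal (‖fderiv ℝ g x‖ ^ 2)) hmeas
    rw [← this]
    exact lintegral_congr fun x => by rw [hfd x]
  rw [hL, ← hR]
  exact my_hardy3 g' hg' hg2'


theorem stmt0
    (F : EuclideanSpace ℝ (Fin 3) × EuclideanSpace ℝ (Fin 3) → ℝ)
    (hF_nonneg : ∀ p, 0 ≤ F p)
    (hF_meas : Measurable F)
    (hF_prob : ∫⁻ p, ENNReal.ofReal (F p) = 1)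
    (hsqrt_diff : Differentiable ℝ (fun p => Real.sqrt (F p))) :
    ∫⁻ p : EuclideanSpace ℝ (Fin 3) × EuclideanSpace ℝ (Fin 3),
        ENNReal.ofReal ((‖p.1 - p.2‖ ^ 2)⁻¹ * F p)
      ≤ 2 * ∫⁻ p : EuclideanSpace ℝ (Fin 3) × EuclideanSpace ℝ (Fin 3),
        ENNReal.ofReal
          (‖gradient (fun v => Real.sqrt (F (v, p.2))) p.1‖ ^ 2 +
           ‖gradient (fun w => Real.sqrt (F (p.1, w))) p.2‖ ^ 2) := by
  borelize ((E3 × E3) →L[ℝ] ℝ)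
  set S : E3 × E3 → ℝ := fun p => Real.sqrt (F p) with hSdef
  have hS : Differentiable ℝ S := hsqrt_diff
  have hSc : Continuous S := hS.continuous
  have hSsq : ∀ p, S p ^ 2 = F p := fun p => Real.sq_sqrt (hF_nonneg p)
  -- partial fderiv identities
  have hfd1 : ∀ p : E3 × E3, fderiv ℝ (fun v => S (v, p.2)) p.1
      = (fderiv ℝ S p).comp (ContinuousLinearMap.inl ℝ E3 E3) := by
    intro p
    have h0 : HasFDerivAt S (fderiv ℝ S p) (p.1, p.2) := by
      rw [Prod.mk.eta]; exact (hS p).hasFDerivAt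
    exact (h0.comp p.1 (hasFDerivAt_prodMk_left (𝕜 := ℝ) p.1 p.2)).fderiv
  have hfd2 : ∀ p : E3 × E3, fderiv ℝ (fun w => S (p.1, w)) p.2
      = (fderiv ℝ S p).comp (ContinuousLinearMap.inr ℝ E3 E3) := by
    intro p
    have h0 : HasFDerivAt S (fderiv ℝ S p) (p.1, p.2) := by
      rw [Prod.mk.eta]; exact (hS p).hasFDerivAt
    exact (h0.comp p.2 (hasFDerivAt_prodMk_right (𝕜 := ℝ) p.1 p.2)).fderiv
  -- measurable surrogates for the partial gradients
  set D1 : E3 × E3 → ℝ :=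
    fun p => ‖(fderiv ℝ S p).comp (ContinuousLinearMap.inl ℝ E3 E3)‖ with hD1def
  set D2 : E3 × E3 → ℝ :=
    fun p => ‖(fderiv ℝ S p).comp (ContinuousLinearMap.inr ℝ E3 E3)‖ with hD2def
  have hD1meas : Measurable D1 := by
    have h2 : Continuous fun L : (E3 × E3) →L[ℝ] ℝ =>
        L.comp (ContinuousLinearMap.inl ℝ E3 E3) :=
      ((ContinuousLinearMap.compL ℝ E3 (E3 × E3) ℝ).flip
        (ContinuousLinearMap.inl ℝ E3 E3)).continuous
    exact ((h2.measurable).comp (measurable_fderiv ℝ S)).norm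
  have hD2meas : Measurable D2 := by
    have h2 : Continuous fun L : (E3 × E3) →L[ℝ] ℝ =>
        L.comp (ContinuousLinearMap.inr ℝ E3 E3) :=
      ((ContinuousLinearMap.compL ℝ E3 (E3 × E3) ℝ).flip
        (ContinuousLinearMap.inr ℝ E3 E3)).continuous
    exact ((h2.measurable).comp (measurable_fderiv ℝ S)).norm
  -- gradient norms
  have hgrad1 : ∀ p : E3 × E3, ‖gradient (fun v => Real.sqrt (F (v, p.2))) p.1‖ = D1 p := by
    intro p
    have h0 : gradient (fun v => Real.sqrt (F (v, p.2))) p.1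
        = (InnerProductSpace.toDual ℝ E3).symm (fderiv ℝ (fun v => S (v, p.2)) p.1) := rfl
    rw [h0, LinearIsometryEquiv.norm_map, hfd1 p]
  have hgrad2 : ∀ p : E3 × E3, ‖gradient (fun w => Real.sqrt (F (p.1, w))) p.2‖ = D2 p := by
    intro p
    have h0 : gradient (fun w => Real.sqrt (F (p.1, w))) p.2
        = (InnerProductSpace.toDual ℝ E3).symm (fderiv ℝ (fun w => S (p.1, w)) p.2) := rfl
    rw [h0, LinearIsometryEquiv.norm_map, hfd2 p]
  -- LHS integrand
  set f : E3 × E3 → ℝ≥0∞ := fun p => ENNReal.ofReal ((‖p.1 - p.2‖ ^ 2)⁻¹ * F p) with hfdef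
  have hfmeas : Measurable f :=
    ((((continuous_fst.sub continuous_snd).norm.pow 2).measurable.inv).mul hF_meas).ennreal_ofReal
  have hvol : (volume : Measure (E3 × E3))
      = (volume : Measure E3).prod (volume : Measure E3) := Measure.volume_eq_prod _ _
  set I1 := ∫⁻ p : E3 × E3, ENNReal.ofReal (D1 p ^ 2) with hI1def
  set I2 := ∫⁻ p : E3 × E3, ENNReal.ofReal (D2 p ^ 2) with hI2def
  set L := ∫⁻ p : E3 × E3, f p with hLdef
  -- RHS decomposition
  have hRHS : ∫⁻ p : E3 × E3, ENNReal.ofReal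
        (‖gradient (fun v => Real.sqrt (F (v, p.2))) p.1‖ ^ 2 +
         ‖gradient (fun w => Real.sqrt (F (p.1, w))) p.2‖ ^ 2)
      = I1 + I2 := by
    rw [hI1def, hI2def, ← lintegral_add_left ((hD1meas.pow_const 2).ennreal_ofReal)]
    refine lintegral_congr fun p => ?_
    rw [hgrad1 p, hgrad2 p, ENNReal.ofReal_add (sq_nonneg _) (sq_nonneg _)]
  -- direction 1 : integrate over v first (for fixed w)
  have hmF : Measurable fun q : E3 × E3 => ENNReal.ofReal (F q) := hF_meas.ennreal_ofReal
  have hdir1 : L ≤ 4 * I1 := by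
    have hFv : ∀ᵐ w ∂(volume : Measure E3),
        ∫⁻ v, ENNReal.ofReal (F (v, w)) ∂(volume : Measure E3) < ∞ := by
      have hswap : Measurable fun q : E3 × E3 => ENNReal.ofReal (F (q.2, q.1)) :=
        hmF.comp measurable_swap
      refine ae_lt_top hswap.lintegral_prod_right' ?_
      have h1 : ∫⁻ w, ∫⁻ v, ENNReal.ofReal (F (v, w))
            ∂(volume : Measure E3) ∂(volume : Measure E3)
          = ∫⁻ p : E3 × E3, ENNReal.ofReal (F p) := by
        rw [hvol]
        exact (lintegral_prod_symm _ hmF.aemeasurable).symm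
      rw [h1, hF_prob]
      exact ENNReal.one_ne_top
    have hae : ∀ᵐ w ∂(volume : Measure E3),
        (∫⁻ v, f (v, w) ∂(volume : Measure E3))
          ≤ 4 * ∫⁻ v, ENNReal.ofReal (D1 (v, w) ^ 2) ∂(volume : Measure E3) := by
      filter_upwards [hFv] with w hw
      set g : E3 → ℝ := fun v => S (v, w) with hgdef
      have hgd : Differentiable ℝ g := hS.comp (differentiable_id.prodMk (differentiable_const w))
      have hg2 : ∫⁻ v, ENNReal.ofReal (g v ^ 2) ∂(volume : Measure E3) ≠ ∞ := by
        have : ∀ v : E3, ENNReal.ofReal (g v ^ 2) = ENNReal.ofReal (F (v, w)) := by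
          intro v; rw [hgdef]; simp only []; rw [hSsq (v, w)]
        rw [lintegral_congr this]
        exact hw.ne
      have hkey := my_hardy3' g hgd w hg2
      have hLeq : ∫⁻ v, ENNReal.ofReal ((‖v - w‖ ^ 2)⁻¹ * g v ^ 2) ∂(volume : Measure E3)
          = ∫⁻ v, f (v, w) ∂(volume : Measure E3) := by
        refine lintegral_congr fun v => ?_
        rw [hfdef]
        simp only []
        rw [hgdef]
        simp only []
        rw [hSsq (v, w)]
      have hReq : ∫⁻ v, ENNReal.ofReal (‖fderiv ℝ g v‖ ^ 2) ∂(volume : Measure E3)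
          = ∫⁻ v, ENNReal.ofReal (D1 (v, w) ^ 2) ∂(volume : Measure E3) := by
        refine lintegral_congr fun v => ?_
        have : fderiv ℝ g v = (fderiv ℝ S (v, w)).comp (ContinuousLinearMap.inl ℝ E3 E3) :=
          hfd1 (v, w)
        rw [this]
      rw [← hLeq, ← hReq]
      exact hkey
    have hL1 : L = ∫⁻ w, ∫⁻ v, f (v, w) ∂(volume : Measure E3) ∂(volume : Measure E3) := by
      rw [hLdef, hvol]
      exact lintegral_prod_symm f hfmeas.aemeasurable
    have hI1' : I1 = ∫⁻ w, ∫⁻ v, ENNReal.ofReal (D1 (v, w) ^ 2)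
        ∂(volume : Measure E3) ∂(volume : Measure E3) := by
      rw [hI1def, hvol]
      exact lintegral_prod_symm _ ((hD1meas.pow_const 2).ennreal_ofReal).aemeasurable
    have hmeas_inner : Measurable fun w : E3 =>
        ∫⁻ v, ENNReal.ofReal (D1 (v, w) ^ 2) ∂(volume : Measure E3) := by
      have : Measurable fun q : E3 × E3 => ENNReal.ofReal (D1 (q.2, q.1) ^ 2) :=
        ((hD1meas.comp measurable_swap).pow_const 2).ennreal_ofReal
      exact this.lintegral_prod_right'
    rw [hL1, hI1']
    calc ∫⁻ w, ∫⁻ v, f (v, w) ∂(volume : Measure E3) ∂(volume : Measure E3)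
        ≤ ∫⁻ w, 4 * ∫⁻ v, ENNReal.ofReal (D1 (v, w) ^ 2)
            ∂(volume : Measure E3) ∂(volume : Measure E3) := lintegral_mono_ae hae
      _ = 4 * ∫⁻ w, ∫⁻ v, ENNReal.ofReal (D1 (v, w) ^ 2)
            ∂(volume : Measure E3) ∂(volume : Measure E3) :=
          lintegral_const_mul 4 hmeas_inner
  -- direction 2 : integrate over w first (for fixed v)
  have hdir2 : L ≤ 4 * I2 := by
    have hFw : ∀ᵐ v ∂(volume : Measure E3),
        ∫⁻ w, ENNReal.ofReal (F (v, w)) ∂(volume : Measure E3) < ∞ := by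
      refine ae_lt_top hmF.lintegral_prod_right' ?_
      have h1 : ∫⁻ v, ∫⁻ w, ENNReal.ofReal (F (v, w))
            ∂(volume : Measure E3) ∂(volume : Measure E3)
          = ∫⁻ p : E3 × E3, ENNReal.ofReal (F p) := by
        rw [hvol]
        exact (lintegral_prod _ hmF.aemeasurable).symm
      rw [h1, hF_prob]
      exact ENNReal.one_ne_top
    have hae : ∀ᵐ v ∂(volume : Measure E3),
        (∫⁻ w, f (v, w) ∂(volume : Measure E3))
          ≤ 4 * ∫⁻ w, ENNReal.ofReal (D2 (v, w) ^ 2) ∂(volume : Measure E3) := by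
      filter_upwards [hFw] with v hv
      set g : E3 → ℝ := fun w => S (v, w) with hgdef
      have hgd : Differentiable ℝ g := hS.comp ((differentiable_const v).prodMk differentiable_id)
      have hg2 : ∫⁻ w, ENNReal.ofReal (g w ^ 2) ∂(volume : Measure E3) ≠ ∞ := by
        have : ∀ w : E3, ENNReal.ofReal (g w ^ 2) = ENNReal.ofReal (F (v, w)) := by
          intro w; rw [hgdef]; simp only []; rw [hSsq (v, w)]
        rw [lintegral_congr this]
        exact hv.ne
      have hkey := my_hardy3' g hgd v hg2
      have hLeq : ∫⁻ w, ENNReal.ofReal ((‖w - v‖ ^ 2)⁻¹ * g w ^ 2) ∂(volume : Measure E3)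
          = ∫⁻ w, f (v, w) ∂(volume : Measure E3) := by
        refine lintegral_congr fun w => ?_
        rw [hfdef]
        simp only []
        rw [hgdef]
        simp only []
        rw [hSsq (v, w), norm_sub_rev]
      have hReq : ∫⁻ w, ENNReal.ofReal (‖fderiv ℝ g w‖ ^ 2) ∂(volume : Measure E3)
          = ∫⁻ w, ENNReal.ofReal (D2 (v, w) ^ 2) ∂(volume : Measure E3) := by
        refine lintegral_congr fun w => ?_
        have : fderiv ℝ g w = (fderiv ℝ S (v, w)).comp (ContinuousLinearMap.inr ℝ E3 E3) :=
          hfd2 (v, w)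
        rw [this]
      rw [← hLeq, ← hReq]
      exact hkey
    have hL1 : L = ∫⁻ v, ∫⁻ w, f (v, w) ∂(volume : Measure E3) ∂(volume : Measure E3) := by
      rw [hLdef, hvol]
      exact lintegral_prod f hfmeas.aemeasurable
    have hI2' : I2 = ∫⁻ v, ∫⁻ w, ENNReal.ofReal (D2 (v, w) ^ 2)
        ∂(volume : Measure E3) ∂(volume : Measure E3) := by
      rw [hI2def, hvol]
      exact lintegral_prod _ ((hD2meas.pow_const 2).ennreal_ofReal).aemeasurable
    have hmeas_inner : Measurable fun v : E3 =>
        ∫⁻ w, ENNReal.ofReal (D2 (v, w) ^ 2) ∂(volume : Measure E3) := by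
      have : Measurable fun q : E3 × E3 => ENNReal.ofReal (D2 (q.1, q.2) ^ 2) :=
        ((hD2meas.pow_const 2).ennreal_ofReal)
      exact this.lintegral_prod_right'
    rw [hL1, hI2']
    calc ∫⁻ v, ∫⁻ w, f (v, w) ∂(volume : Measure E3) ∂(volume : Measure E3)
        ≤ ∫⁻ v, 4 * ∫⁻ w, ENNReal.ofReal (D2 (v, w) ^ 2)
            ∂(volume : Measure E3) ∂(volume : Measure E3) := lintegral_mono_ae hae
      _ = 4 * ∫⁻ v, ∫⁻ w, ENNReal.ofReal (D2 (v, w) ^ 2)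
            ∂(volume : Measure E3) ∂(volume : Measure E3) :=
          lintegral_const_mul 4 hmeas_inner
  -- combine
  rw [hRHS]
  show L ≤ 2 * (I1 + I2)
  have h2L : 2 * L ≤ 2 * (2 * (I1 + I2)) := by
    calc 2 * L = L + L := (two_mul L)
      _ ≤ 4 * I1 + 4 * I2 := add_le_add hdir1 hdir2
      _ = 2 * (2 * (I1 + I2)) := by ring
  exact (ENNReal.mul_le_mul_iff_right (by norm_num) (by norm_num)).mp h2L

end
end HardyAux
end

section
/- Let δ > 0, R > 0, and let v₁, v₂, v₃ ∈ B(0,R) ⊂ ℝ³ be δ-non-aligned. Let v ∈ ℝ³ and let ξ ∈ ℝ³ be a unit vector, and define the double-sided cone C := { w ∈ ℝ³ : |p_{ξ^⊥}(v−w)| ≤ δ |v−w| / (2 + R + |v|) }. Then there exists k ∈ {1,2,3} such that C does not intersect the ball B(v_k, 2δ). -/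
/- STATEMENT 3:
Let δ > 0, R > 0, v₁,v₂,v₃ ∈ B(0,R) ⊂ ℝ³ be δ-non-aligned, v ∈ ℝ³, ξ a unit vector,
and C := { w : |p_{ξ^⊥}(v−w)| ≤ δ|v−w|/(2+R+|v|) } the double-sided cone centered at v
with axis ξ.  Then there is k ∈ {1,2,3} such that C does not intersect B(v_k, 2δ). -/

open MeasureTheory Real Set Metric
open scoped RealInnerProductSpace

noncomputable section

/-- Orthogonal projection onto the plane orthogonal to `u`. -/
def projPerp (u x : EuclideanSpace ℝ (Fin 3)) : EuclideanSpace ℝ (Fin 3) :=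
  (Submodule.orthogonalProjectionOnto (Submodule.span ℝ {u})ᗮ x : EuclideanSpace ℝ (Fin 3))

/-- Three points of ℝ³ are δ-non-aligned if `|v₂−v₁| ≥ 6√δ` and
`|p_{(v₂−v₁)^⊥}(v₃−v₁)| ≥ 24δ + 2√δ|v₃−v₁|`. -/
def DeltaNonAligned (δ : ℝ) (v₁ v₂ v₃ : EuclideanSpace ℝ (Fin 3)) : Prop :=
  6 * Real.sqrt δ ≤ ‖v₂ - v₁‖ ∧
  24 * δ + 2 * Real.sqrt δ * ‖v₃ - v₁‖ ≤ ‖projPerp (v₂ - v₁) (v₃ - v₁)‖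


lemma projPerp_smul_self (u : EuclideanSpace ℝ (Fin 3)) (c : ℝ) :
    projPerp u (c • u) = 0 := by
  unfold projPerp
  rw [_root_.map_smul]
  have h : Submodule.orthogonalProjectionOnto (Submodule.span ℝ {u})ᗮ u = 0 :=
    Submodule.orthogonalProjectionOnto_apply_of_mem_orthogonal
      (Submodule.le_orthogonal_orthogonal _ (Submodule.mem_span_singleton_self u))
  rw [h]
  simp

lemma projPerp_norm_le (u x : EuclideanSpace ℝ (Fin 3)) : ‖projPerp u x‖ ≤ ‖x‖ := by
  unfold projPerp
  have := (Submodule.orthogonalProjectionOnto (Submodule.span ℝ {u})ᗮ).le_opNorm x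
  calc ‖(Submodule.orthogonalProjectionOnto (Submodule.span ℝ {u})ᗮ x : EuclideanSpace ℝ (Fin 3))‖
      = ‖Submodule.orthogonalProjectionOnto (Submodule.span ℝ {u})ᗮ x‖ := rfl
    _ ≤ ‖Submodule.orthogonalProjectionOnto (Submodule.span ℝ {u})ᗮ‖ * ‖x‖ := this
    _ ≤ 1 * ‖x‖ := by
        gcongr
        exact Submodule.orthogonalProjectionOnto_norm_le _
    _ = ‖x‖ := one_mul _

lemma projPerp_norm_le_sub (u x : EuclideanSpace ℝ (Fin 3)) (c : ℝ) :
    ‖projPerp u x‖ ≤ ‖x - c • u‖ := by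
  have h : projPerp u x = projPerp u (x - c • u) := by
    unfold projPerp
    rw [map_sub]
    have := projPerp_smul_self u c
    unfold projPerp at this
    push_cast
    rw [this]
    simp
  rw [h]
  exact projPerp_norm_le _ _

lemma projPerp_smul (u x : EuclideanSpace ℝ (Fin 3)) (c : ℝ) :
    projPerp u (c • x) = c • projPerp u x := by
  unfold projPerp
  rw [_root_.map_smul]
  push_cast
  rfl

lemma projPerp_sub_mem (ξ x : EuclideanSpace ℝ (Fin 3)) :
    ∃ c : ℝ, x - projPerp ξ x = c • ξ := by
  have h : x - projPerp ξ x ∈ ((Submodule.span ℝ {ξ})ᗮ)ᗮ :=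
    Submodule.sub_starProjection_mem_orthogonal x
  rw [Submodule.orthogonal_orthogonal] at h
  obtain ⟨a, ha⟩ := Submodule.mem_span_singleton.mp h
  exact ⟨a, ha.symm⟩

lemma arith_contra (σ N : ℝ) (hσpos : 0 < σ) (hσhalf : σ ≤ 1 / 2) (hN0 : 0 ≤ N)
    (hchain : (18 * σ ^ 2 + 2 * σ * N) * (3 * σ) ≤ 6 * σ ^ 2 * (N + 6 * σ ^ 2)) : False := by
  have h54 : 54 * σ ^ 3 ≤ 36 * σ ^ 4 := by nlinarith [hchain]
  have h36 : 36 * σ ^ 4 ≤ 18 * σ ^ 3 := by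
    nlinarith [mul_nonneg (mul_nonneg (mul_nonneg hσpos.le hσpos.le) hσpos.le)
      (by linarith : (0:ℝ) ≤ 1 - 2 * σ)]
  nlinarith [mul_pos hσpos (mul_pos hσpos hσpos)]

theorem stmt3 (δ R : ℝ) (hδ : 0 < δ) (hR : 0 < R)
    (v₁ v₂ v₃ : EuclideanSpace ℝ (Fin 3))
    (h₁ : v₁ ∈ Metric.ball (0 : EuclideanSpace ℝ (Fin 3)) R)
    (h₂ : v₂ ∈ Metric.ball (0 : EuclideanSpace ℝ (Fin 3)) R)
    (h₃ : v₃ ∈ Metric.ball (0 : EuclideanSpace ℝ (Fin 3)) R)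
    (hna : DeltaNonAligned δ v₁ v₂ v₃)
    (v ξ : EuclideanSpace ℝ (Fin 3)) (hξ : ‖ξ‖ = 1) :
    ∃ k : Fin 3,
      ∀ w ∈ {w : EuclideanSpace ℝ (Fin 3) |
          ‖projPerp ξ (v - w)‖ ≤ δ * ‖v - w‖ / (2 + R + ‖v‖)},
        w ∉ Metric.ball (![v₁, v₂, v₃] k) (2 * δ) := by
  by_contra hcon
  push_neg at hcon
  set σ := Real.sqrt δ with hσdef
  have hσpos : 0 < σ := Real.sqrt_pos.mpr hδ
  have hσsq : σ ^ 2 = δ := Real.sq_sqrt hδ.le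
  set N := ‖v₃ - v₁‖ with hNdef
  have hN0 : 0 ≤ N := norm_nonneg _
  -- δ is small: σ ≤ 1/2
  have hkey0 : 24 * δ + 2 * σ * N ≤ N :=
    le_trans hna.2 (projPerp_norm_le _ _)
  have hσhalf : σ ≤ 1 / 2 := by
    by_contra h
    push_neg at h
    nlinarith [mul_nonneg hN0 (by linarith : (0:ℝ) ≤ 2 * σ - 1)]
  have h2δσ : 2 * δ ≤ σ := by nlinarith
  -- decomposition for each point
  have main : ∀ p w : EuclideanSpace ℝ (Fin 3), p ∈ Metric.ball (0 : EuclideanSpace ℝ (Fin 3)) R →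
      ‖projPerp ξ (v - w)‖ ≤ δ * ‖v - w‖ / (2 + R + ‖v‖) →
      w ∈ Metric.ball p (2 * δ) →
      ∃ (c : ℝ) (e : EuclideanSpace ℝ (Fin 3)), v - p = c • ξ + e ∧ ‖e‖ ≤ 3 * δ := by
    intro p w hp hwS hwb
    obtain ⟨c, hc⟩ := projPerp_sub_mem ξ (v - w)
    refine ⟨c, projPerp ξ (v - w) + (w - p), ?_, ?_⟩
    · have hrw : v - p = ((v - w) - projPerp ξ (v - w)) + (projPerp ξ (v - w) + (w - p)) := by
        abel
      rw [hrw, hc]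
    · have hwp : ‖w - p‖ < 2 * δ := by
        rw [Metric.mem_ball, dist_eq_norm] at hwb
        exact hwb
      have hpR : ‖p‖ < R := by
        rw [Metric.mem_ball, dist_zero_right] at hp
        exact hp
      have hD : (0:ℝ) < 2 + R + ‖v‖ := by positivity
      have hvw : ‖v - w‖ ≤ 2 + R + ‖v‖ := by
        have h1 : ‖v - w‖ ≤ ‖v‖ + ‖w‖ := norm_sub_le _ _
        have h2 : ‖w‖ ≤ ‖p‖ + ‖w - p‖ := by
          have : w = p + (w - p) := by abel
          calc ‖w‖ = ‖p + (w - p)‖ := by rw [← this]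
            _ ≤ ‖p‖ + ‖w - p‖ := norm_add_le _ _
        have : 2 * δ ≤ 1 := by nlinarith
        linarith
      have hproj : ‖projPerp ξ (v - w)‖ ≤ δ := by
        refine hwS.trans ?_
        rw [div_le_iff₀ hD]
        nlinarith [norm_nonneg (v - w)]
      have := norm_add_le (projPerp ξ (v - w)) (w - p)
      linarith
  -- apply to the three points
  obtain ⟨w₁, hw₁S, hw₁b⟩ := hcon 0
  obtain ⟨w₂, hw₂S, hw₂b⟩ := hcon 1
  obtain ⟨w₃, hw₃S, hw₃b⟩ := hcon 2
  simp only [Matrix.cons_val_zero, Matrix.cons_val_one, Matrix.head_cons,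
    Matrix.cons_val_two, Matrix.tail_cons] at hw₁b hw₂b hw₃b
  obtain ⟨c₁, e₁, hd₁, he₁⟩ := main v₁ w₁ h₁ hw₁S hw₁b
  obtain ⟨c₂, e₂, hd₂, he₂⟩ := main v₂ w₂ h₂ hw₂S hw₂b
  obtain ⟨c₃, e₃, hd₃, he₃⟩ := main v₃ w₃ h₃ hw₃S hw₃b
  set s := c₁ - c₂ with hsdef
  set r := c₁ - c₃ with hrdef
  set f := e₁ - e₂ with hfdef
  set g := e₁ - e₃ with hgdef
  have hu : v₂ - v₁ = s • ξ + f := by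
    have h : v₂ - v₁ = (v - v₁) - (v - v₂) := by abel
    rw [h, hd₁, hd₂, hsdef, hfdef, sub_smul]
    abel
  have hg3 : v₃ - v₁ = r • ξ + g := by
    have h : v₃ - v₁ = (v - v₁) - (v - v₃) := by abel
    rw [h, hd₁, hd₃, hrdef, hgdef, sub_smul]
    abel
  have hf6 : ‖f‖ ≤ 6 * δ := by
    have := norm_sub_le e₁ e₂
    rw [hfdef]; linarith
  have hg6 : ‖g‖ ≤ 6 * δ := by
    have := norm_sub_le e₁ e₃
    rw [hgdef]; linarith
  -- bound on |s|
  have hnormsmul : ∀ a : ℝ, ‖a • ξ‖ = |a| := by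
    intro a
    rw [norm_smul, hξ, Real.norm_eq_abs, mul_one]
  have hs3 : 3 * σ ≤ |s| := by
    have h1 : 6 * σ ≤ ‖v₂ - v₁‖ := hna.1
    have h2 : ‖v₂ - v₁‖ ≤ |s| + ‖f‖ := by
      rw [hu]
      have := norm_add_le (s • ξ) f
      rw [hnormsmul s] at this
      exact this
    linarith
  -- bound on |r|
  have hr6 : |r| ≤ N + 6 * δ := by
    have h1 : r • ξ = (v₃ - v₁) - g := by rw [hg3]; abel
    have h2 : ‖(v₃ - v₁) - g‖ ≤ N + ‖g‖ := norm_sub_le _ _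
    rw [← hnormsmul r, h1]
    linarith
  -- key inequality
  set P := ‖projPerp (v₂ - v₁) (v₃ - v₁)‖ with hPdef
  have hP0 : 24 * δ + 2 * σ * N ≤ P := hna.2
  have hkey : |s| * P ≤ 6 * δ * |s| + 6 * δ * |r| := by
    have h1 : |s| * P = ‖projPerp (v₂ - v₁) (s • (v₃ - v₁))‖ := by
      rw [projPerp_smul, norm_smul, Real.norm_eq_abs]
    have h2 : ‖projPerp (v₂ - v₁) (s • (v₃ - v₁))‖ ≤ ‖s • (v₃ - v₁) - r • (v₂ - v₁)‖ :=
      projPerp_norm_le_sub _ _ r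
    have h3 : s • (v₃ - v₁) - r • (v₂ - v₁) = s • g - r • f := by
      rw [hg3, hu, smul_add, smul_add, smul_smul, smul_smul, mul_comm]
      abel
    have h4 : ‖s • g - r • f‖ ≤ |s| * ‖g‖ + |r| * ‖f‖ := by
      calc ‖s • g - r • f‖ ≤ ‖s • g‖ + ‖r • f‖ := norm_sub_le _ _
        _ = |s| * ‖g‖ + |r| * ‖f‖ := by rw [norm_smul, norm_smul, Real.norm_eq_abs, Real.norm_eq_abs]
    have h5 : |s| * ‖g‖ + |r| * ‖f‖ ≤ |s| * (6 * δ) + |r| * (6 * δ) := by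
      have := abs_nonneg s
      have := abs_nonneg r
      gcongr
    rw [h1]
    calc ‖projPerp (v₂ - v₁) (s • (v₃ - v₁))‖
        ≤ ‖s • (v₃ - v₁) - r • (v₂ - v₁)‖ := h2
      _ = ‖s • g - r • f‖ := by rw [h3]
      _ ≤ |s| * ‖g‖ + |r| * ‖f‖ := h4
      _ ≤ 6 * δ * |s| + 6 * δ * |r| := by linarith [h5]
  -- contradiction
  have hs0 : (0:ℝ) ≤ |s| := abs_nonneg s
  have hchain : (18 * δ + 2 * σ * N) * (3 * σ) ≤ 6 * δ * (N + 6 * δ) := by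
    have hA : (18 * δ + 2 * σ * N) * (3 * σ) ≤ (18 * δ + 2 * σ * N) * |s| := by
      have : (0:ℝ) ≤ 18 * δ + 2 * σ * N := by positivity
      exact mul_le_mul_of_nonneg_left hs3 this
    have hB : (18 * δ + 2 * σ * N) * |s| ≤ (P - 6 * δ) * |s| := by
      apply mul_le_mul_of_nonneg_right _ hs0
      linarith
    have hC : (P - 6 * δ) * |s| ≤ 6 * δ * |r| := by
      have e : (P - 6 * δ) * |s| = |s| * P - 6 * δ * |s| := by ring
      rw [e]
      linarith [hkey]
    have hD2 : 6 * δ * |r| ≤ 6 * δ * (N + 6 * δ) :=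
      mul_le_mul_of_nonneg_left hr6 (by positivity)
    linarith
  rw [← hσsq] at hchain
  exact arith_contra σ N hσpos hσhalf hN0 (by linarith [hchain])

end
end

section
/- Let d ≥ 1, let g : ℝ^d → ℂ be Lipschitz, let ω : ℝ^d → [0,∞) and b : ℝ^d → ℝ^d be Borel measurable. Then |g| is Lipschitz, both g and |g| are differentiable almost everywhere, at almost every point x one has |D|g|(x)[b(x)]| ≤ |Dg(x)[b(x)]|, and consequently ∫_{ℝ^d} ω(x) |Dg(x)[b(x)]|² dx ≥ ∫_{ℝ^d} ω(x) |D|g|(x)[b(x)]|² dx (the integrals taken in [0,∞], the integrands defined a.e. via the a.e.-existing derivatives). -/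
/- STATEMENT 8:
Let g : ℝ^d → ℂ be Lipschitz, ω : ℝ^d → [0,∞) and b : ℝ^d → ℝ^d Borel measurable.
Then |g| is Lipschitz, g and |g| are differentiable a.e., a.e.
|D|g|(x)[b(x)]| ≤ |Dg(x)[b(x)]|, and
∫ ω |Dg[b]|² ≥ ∫ ω |D|g|[b]|², the integrals in [0,∞] (the derivatives exist a.e. by
Rademacher; `fderiv` takes the junk value 0 where the derivative does not exist, which
agrees a.e. with the true derivative). -/

open MeasureTheory Real
open scoped ENNReal


lemma key_ineq {d : ℕ} (g : EuclideanSpace ℝ (Fin d) → ℂ)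
    {x v : EuclideanSpace ℝ (Fin d)}
    (hg1 : DifferentiableAt ℝ g x)
    (hg2 : DifferentiableAt ℝ (fun y => ‖g y‖) x) :
    |fderiv ℝ (fun y => ‖g y‖) x v| ≤ ‖fderiv ℝ g x v‖ := by
  set L : ℝ → EuclideanSpace ℝ (Fin d) := fun t => x + t • v with hLdef
  have hL0 : L 0 = x := by simp [hLdef]
  have hL : HasDerivAt L v 0 := by
    simpa [hLdef] using (((hasDerivAt_id (0:ℝ)).smul_const v).const_add x)
  have hψ : HasDerivAt (fun t => g (L t)) (fderiv ℝ g x v) 0 := by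
    have hfd : HasFDerivAt g (fderiv ℝ g x) (L 0) := by rw [hL0]; exact hg1.hasFDerivAt
    have := hfd.comp_hasDerivAt 0 hL
    exact this
  have hφ : HasDerivAt (fun t => ‖g (L t)‖)
      (fderiv ℝ (fun y => ‖g y‖) x v) 0 := by
    have hfd : HasFDerivAt (fun y => ‖g y‖) (fderiv ℝ (fun y => ‖g y‖) x) (L 0) := by rw [hL0]; exact hg2.hasFDerivAt
    have := hfd.comp_hasDerivAt 0 hL
    exact this
  rw [hasDerivAt_iff_tendsto_slope] at hψ hφ
  have h1 : Filter.Tendsto (fun t => |slope (fun t => ‖g (L t)‖) 0 t|)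
      (nhdsWithin 0 {(0:ℝ)}ᶜ) (nhds |fderiv ℝ (fun y => ‖g y‖) x v|) :=
    (continuous_abs.tendsto _).comp hφ
  have h2 : Filter.Tendsto (fun t => ‖slope (fun t => g (L t)) 0 t‖)
      (nhdsWithin 0 {(0:ℝ)}ᶜ) (nhds ‖fderiv ℝ g x v‖) :=
    (continuous_norm.tendsto _).comp hψ
  refine le_of_tendsto_of_tendsto h1 h2 ?_
  filter_upwards with t
  simp only [slope, vsub_eq_sub, smul_eq_mul, abs_mul, norm_smul, Real.norm_eq_abs]
  gcongr
  calc |‖g (L t)‖ - ‖g (L 0)‖|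
      = |‖g (L t)‖ - ‖g (L 0)‖| := rfl
    _ ≤ ‖g (L t) - g (L 0)‖ := abs_norm_sub_norm_le _ _

theorem stmt8 {d : ℕ} (hd : 1 ≤ d)
    (K : NNReal) (g : EuclideanSpace ℝ (Fin d) → ℂ) (hg : LipschitzWith K g)
    (ω : EuclideanSpace ℝ (Fin d) → ℝ) (hω_nonneg : ∀ x, 0 ≤ ω x) (hω_meas : Measurable ω)
    (b : EuclideanSpace ℝ (Fin d) → EuclideanSpace ℝ (Fin d)) (hb_meas : Measurable b) :
    LipschitzWith K (fun x => ‖g x‖) ∧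
    (∀ᵐ x, DifferentiableAt ℝ g x) ∧
    (∀ᵐ x, DifferentiableAt ℝ (fun y => ‖g y‖) x) ∧
    (∀ᵐ x, |fderiv ℝ (fun y => ‖g y‖) x (b x)| ≤ ‖fderiv ℝ g x (b x)‖) ∧
    (∫⁻ x, ENNReal.ofReal (ω x * |fderiv ℝ (fun y => ‖g y‖) x (b x)| ^ 2)
      ≤ ∫⁻ x, ENNReal.ofReal (ω x * ‖fderiv ℝ g x (b x)‖ ^ 2)) := by
  have habs : LipschitzWith K (fun x => ‖g x‖) := by
    have : LipschitzWith (1 * K) (fun x => ‖g x‖) := lipschitzWith_one_norm.comp hg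
    simpa using this
  have h1 : ∀ᵐ x, DifferentiableAt ℝ g x := hg.ae_differentiableAt
  have h2 : ∀ᵐ x, DifferentiableAt ℝ (fun y => ‖g y‖) x :=
    habs.ae_differentiableAt
  have h3 : ∀ᵐ x, |fderiv ℝ (fun y => ‖g y‖) x (b x)| ≤ ‖fderiv ℝ g x (b x)‖ := by
    filter_upwards [h1, h2] with x hx1 hx2
    exact key_ineq g hx1 hx2
  refine ⟨habs, h1, h2, h3, ?_⟩
  refine lintegral_mono_ae ?_
  filter_upwards [h3] with x hx
  apply ENNReal.ofReal_le_ofReal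
  have : |fderiv ℝ (fun y => ‖g y‖) x (b x)| ^ 2 ≤ ‖fderiv ℝ g x (b x)‖ ^ 2 := by
    have h0 : (0:ℝ) ≤ |fderiv ℝ (fun y => ‖g y‖) x (b x)| := abs_nonneg _
    exact pow_le_pow_left₀ h0 hx 2
  exact mul_le_mul_of_nonneg_left this (hω_nonneg x)
end
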